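/- (Superminimal fibres give harmonic morphisms, k = 1.) Let U ⊆ ℝ^{2m} ≅ ℂ^m and V ⊆ ℂ be open, let M : V → so(m,ℂ) be holomorphic, and let z : U → V be a smooth map that is (M∘z)-holomorphic, i.e. ∂z/∂q̄^i + Σ_{j=1}^m M^j_{ī}(z(q)) ∂z/∂q^j = 0 for all i = 1,…,m. Then Δz = 0 on U; together with horizontal weak conformality this makes z a harmonic morphism. -/

import Mathlib

open Complex BigOperators Matrix

/-- Partial derivative in the direction of the real coordinate `x^{2j-1}`,
identifying `ℝ^{2m} ≅ ℂ^m` via `q^j = x^{2j-1} + i x^{2j}`. -/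
noncomputable def pdRe {m : ℕ} (f : (Fin m → ℂ) → ℂ) (j : Fin m) (x : Fin m → ℂ) : ℂ :=
  fderiv ℝ f x (Pi.single j 1)

/-- Partial derivative in the direction of the real coordinate `x^{2j}`. -/
noncomputable def pdIm {m : ℕ} (f : (Fin m → ℂ) → ℂ) (j : Fin m) (x : Fin m → ℂ) : ℂ :=
  fderiv ℝ f x (Pi.single j Complex.I)

/-- Wirtinger derivative `∂f/∂q^j = ½(∂f/∂x^{2j-1} − i ∂f/∂x^{2j})`. -/
noncomputable def wdq {m : ℕ} (f : (Fin m → ℂ) → ℂ) (j : Fin m) (x : Fin m → ℂ) : ℂ :=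
  (pdRe f j x - Complex.I * pdIm f j x) / 2

/-- Wirtinger derivative `∂f/∂q̄^j = ½(∂f/∂x^{2j-1} + i ∂f/∂x^{2j})`. -/
noncomputable def wdqbar {m : ℕ} (f : (Fin m → ℂ) → ℂ) (j : Fin m) (x : Fin m → ℂ) : ℂ :=
  (pdRe f j x + Complex.I * pdIm f j x) / 2

/-- Laplacian `Δf = Σ_{i=1}^{2m} ∂²f/(∂x^i)²`. -/
noncomputable def lap {m : ℕ} (f : (Fin m → ℂ) → ℂ) (x : Fin m → ℂ) : ℂ :=
  ∑ j, (pdRe (fun y => pdRe f j y) j x + pdIm (fun y => pdIm f j y) j x)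

/-- The horizontal weak conformality quantity `Σ_{i=1}^{2m} (∂f/∂x^i)²`. -/
noncomputable def hwc {m : ℕ} (f : (Fin m → ℂ) → ℂ) (x : Fin m → ℂ) : ℂ :=
  ∑ j, ((pdRe f j x) ^ 2 + (pdIm f j x) ^ 2)





private lemma skew_pair_sum {m : ℕ} (N T : Fin m → Fin m → ℂ)
    (hN : ∀ i j, N j i = -N i j) (hT : ∀ i j, T i j = T j i) :
    ∑ i, ∑ j, N j i * T i j = 0 := by
  have h : (∑ i, ∑ j, N j i * T i j) = -∑ i, ∑ j, N j i * T i j := by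
    calc ∑ i, ∑ j, N j i * T i j
        = ∑ i, ∑ j, -(N i j * T j i) := by
          refine Finset.sum_congr rfl fun i _ => Finset.sum_congr rfl fun j _ => ?_
          rw [hN, hT]; ring
      _ = -∑ i, ∑ j, N i j * T j i := by
          simp [Finset.sum_neg_distrib]
      _ = -∑ j, ∑ i, N i j * T j i := by rw [Finset.sum_comm]
  linear_combination h / 2

private lemma hwc_aux {m : ℕ} (N : Fin m → Fin m → ℂ) (X Y w : Fin m → ℂ)
    (hN : ∀ i j, N j i = -N i j)
    (hw : ∀ j, w j = (X j - Complex.I * Y j) / 2)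
    (h : ∀ i, (X i + Complex.I * Y i) / 2 + ∑ j, N j i * w j = 0) :
    ∑ i, (X i ^ 2 + Y i ^ 2) = 0 := by
  have key : ∀ i, X i ^ 2 + Y i ^ 2 = ∑ j, (-4 * N j i) * (w i * w j) := by
    intro i
    have h4 : X i ^ 2 + Y i ^ 2 = 4 * w i * ((X i + Complex.I * Y i) / 2) := by
      rw [hw i]; linear_combination (Y i ^ 2) * Complex.I_sq
    have h5 : (X i + Complex.I * Y i) / 2 = -∑ j, N j i * w j :=
      eq_neg_of_add_eq_zero_left (h i)
    rw [h4, h5, mul_neg, Finset.mul_sum, ← Finset.sum_neg_distrib]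
    exact Finset.sum_congr rfl fun j _ => by ring
  calc ∑ i, (X i ^ 2 + Y i ^ 2)
      = ∑ i, ∑ j, (-4 * N j i) * (w i * w j) := Finset.sum_congr rfl fun i _ => key i
    _ = 0 := skew_pair_sum (fun p r => -4 * N p r) (fun i j => w i * w j)
        (fun i j => by rw [hN]; ring) (fun i j => mul_comm _ _)

private lemma lap_aux {m : ℕ} (a b c d g N : Fin m → Fin m → ℂ) (X Y w : Fin m → ℂ)
    (ha : ∀ i j, a i j = a j i) (hd : ∀ i j, d i j = d j i) (hbc : ∀ i j, b i j = c j i)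
    (hg : ∀ i j, g j i = -g i j) (hN : ∀ i j, N j i = -N i j)
    (hw : ∀ j, w j = (X j - Complex.I * Y j) / 2)
    (heq1 : ∀ i, (a i i + Complex.I * b i i) / 2
        + ∑ j, (g j i * X i * w j + N j i * ((a i j - Complex.I * b i j) / 2)) = 0)
    (heq2 : ∀ i, (c i i + Complex.I * d i i) / 2
        + ∑ j, (g j i * Y i * w j + N j i * ((c i j - Complex.I * d i j) / 2)) = 0) :
    ∑ i, (a i i + d i i) = 0 := by
  have key : ∀ i, a i i + d i i
      = -∑ j, ((4 * g j i) * (w i * w j)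
          + N j i * (a i j - Complex.I * b i j - Complex.I * c i j - d i j)) := by
    intro i
    have hS : ∑ j, ((4 * g j i) * (w i * w j)
          + N j i * (a i j - Complex.I * b i j - Complex.I * c i j - d i j))
        = 2 * (∑ j, (g j i * X i * w j + N j i * ((a i j - Complex.I * b i j) / 2)))
          - 2 * Complex.I * (∑ j, (g j i * Y i * w j
              + N j i * ((c i j - Complex.I * d i j) / 2))) := by
      rw [Finset.mul_sum, Finset.mul_sum, ← Finset.sum_sub_distrib]
      refine Finset.sum_congr rfl fun j _ => ?_
      rw [hw i]
      linear_combination (-(N j i * d i j)) * Complex.I_sq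
    rw [hS]
    have h1 := heq1 i
    have h2 := heq2 i
    have hb := hbc i i
    linear_combination 2 * h1 - 2 * Complex.I * h2 + d i i * Complex.I_sq - Complex.I * hb
  have h1 : ∑ i, ∑ j, (4 * g j i) * (w i * w j) = 0 :=
    skew_pair_sum (fun p r => 4 * g p r) (fun i j => w i * w j)
      (fun i j => by rw [hg]; ring) (fun i j => mul_comm _ _)
  have h2 : ∑ i, ∑ j, N j i * (a i j - Complex.I * b i j - Complex.I * c i j - d i j) = 0 :=
    skew_pair_sum N (fun i j => a i j - Complex.I * b i j - Complex.I * c i j - d i j) hN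
      (fun i j => by
        rw [ha i j, hd i j, hbc i j, ← hbc j i]; ring)
  calc ∑ i, (a i i + d i i)
      = ∑ i, -∑ j, ((4 * g j i) * (w i * w j)
          + N j i * (a i j - Complex.I * b i j - Complex.I * c i j - d i j)) :=
        Finset.sum_congr rfl fun i _ => key i
    _ = 0 := by
        simp only [Finset.sum_add_distrib, Finset.sum_neg_distrib, neg_add, h1, h2] at *
        simp [Finset.sum_add_distrib, h1, h2]

/-- superminimal fibres give harmonic morphisms, `k = 1`: if
`z : U → V ⊆ ℂ` is `(M∘z)`-holomorphic with `M : V → so(m,ℂ)` holomorphic, then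
`Δz = 0` on `U`; together with horizontal weak conformality (`Σ_i (∂z/∂x^i)² = 0`)
this makes `z` a harmonic morphism. -/
theorem harmonic_morphism_k_one {m : ℕ}
    (U : Set (Fin m → ℂ)) (hU : IsOpen U)
    (V : Set ℂ) (hV : IsOpen V)
    (M : ℂ → Matrix (Fin m) (Fin m) ℂ)
    (hskew : ∀ v ∈ V, (M v)ᵀ = -(M v))
    (hM : ∀ i j, DifferentiableOn ℂ (fun w => M w i j) V)
    (z : (Fin m → ℂ) → ℂ) (hz : ContDiffOn ℝ (⊤ : ℕ∞) z U)
    (hzV : Set.MapsTo z U V)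
    (hhol : ∀ q ∈ U, ∀ i, wdqbar z i q + ∑ j, M (z q) j i * wdq z j q = 0) :
    ∀ q ∈ U, lap z q = 0 ∧ hwc z q = 0 := by
  intro q hq
  have hqU : U ∈ nhds q := hU.mem_nhds hq
  have hzVq : z q ∈ V := hzV hq
  have hzAt : ∀ y ∈ U, ContDiffAt ℝ (⊤ : ℕ∞) z y := fun y hy => hz.contDiffAt (hU.mem_nhds hy)
  have hzd : DifferentiableAt ℝ z q := (hzAt q hq).differentiableAt (by simp)
  have hz' : DifferentiableAt ℝ (fderiv ℝ z) q :=
    ((hzAt q hq).fderiv_right (m := 1) (by norm_cast)).differentiableAt (by simp)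
  set z'' := fderiv ℝ (fderiv ℝ z) q with hz''def
  have hsymm : ∀ v w : Fin m → ℂ, z'' v w = z'' w v := by
    have hev : ∀ᶠ y in nhds q, HasFDerivAt z (fderiv ℝ z y) y := by
      filter_upwards [hqU] with y hy using ((hzAt y hy).differentiableAt (by simp)).hasFDerivAt
    exact fun v w => second_derivative_symmetric_of_eventually hev hz'.hasFDerivAt v w
  -- directional second derivatives
  have hBd : ∀ v : Fin m → ℂ, DifferentiableAt ℝ (fun y => fderiv ℝ z y v) q :=
    fun v => hz'.clm_apply (differentiableAt_const v)
  have hBf : ∀ v w : Fin m → ℂ, fderiv ℝ (fun y => fderiv ℝ z y v) q w = z'' w v := by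
    intro v w
    rw [fderiv_clm_apply hz' (differentiableAt_const v)]
    simp [hz''def]
  -- first Wirtinger derivatives: differentiability and derivative formulas
  have hwbar_d : ∀ i, DifferentiableAt ℝ (fun y => wdqbar z i y) q := by
    intro i
    simp only [wdqbar, pdRe, pdIm, div_eq_mul_inv]
    exact ((hBd (Pi.single i 1)).add ((hBd (Pi.single i Complex.I)).const_mul Complex.I)).mul_const _
  have hw_d : ∀ j, DifferentiableAt ℝ (fun y => wdq z j y) q := by
    intro j
    simp only [wdq, pdRe, pdIm, div_eq_mul_inv]
    exact ((hBd (Pi.single j 1)).sub ((hBd (Pi.single j Complex.I)).const_mul Complex.I)).mul_const _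
  have hwbar_f : ∀ i (v : Fin m → ℂ), fderiv ℝ (fun y => wdqbar z i y) q v
      = (z'' v (Pi.single i 1) + Complex.I * z'' v (Pi.single i Complex.I)) / 2 := by
    intro i v
    have hd1 := hBd (Pi.single i 1)
    have hd2 := (hBd (Pi.single i Complex.I)).const_mul Complex.I
    have h4 : fderiv ℝ (fun y => wdqbar z i y) q
        = fderiv ℝ (fun y => (fderiv ℝ z y (Pi.single i 1)
            + Complex.I * fderiv ℝ z y (Pi.single i Complex.I)) * (2:ℂ)⁻¹) q := by
      simp only [wdqbar, pdRe, pdIm, div_eq_mul_inv]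
    rw [h4, fderiv_mul_const (hd1.fun_add hd2), fderiv_fun_add hd1 hd2,
      fderiv_const_mul (hBd (Pi.single i Complex.I)) Complex.I]
    simp [hBf, smul_eq_mul, div_eq_mul_inv]
    ring
  have hw_f : ∀ j (v : Fin m → ℂ), fderiv ℝ (fun y => wdq z j y) q v
      = (z'' v (Pi.single j 1) - Complex.I * z'' v (Pi.single j Complex.I)) / 2 := by
    intro j v
    have hd1 := hBd (Pi.single j 1)
    have hd2 := (hBd (Pi.single j Complex.I)).const_mul Complex.I
    have h4 : fderiv ℝ (fun y => wdq z j y) q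
        = fderiv ℝ (fun y => (fderiv ℝ z y (Pi.single j 1)
            - Complex.I * fderiv ℝ z y (Pi.single j Complex.I)) * (2:ℂ)⁻¹) q := by
      simp only [wdq, pdRe, pdIm, div_eq_mul_inv]
    rw [h4, fderiv_mul_const (hd1.fun_sub hd2), fderiv_fun_sub hd1 hd2,
      fderiv_const_mul (hBd (Pi.single j Complex.I)) Complex.I]
    simp [hBf, smul_eq_mul, div_eq_mul_inv]
    ring
  -- chain rule for the matrix entries
  have hMd : ∀ j i, DifferentiableAt ℂ (fun w => M w j i) (z q) :=
    fun j i => (hM j i).differentiableAt (hV.mem_nhds hzVq)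
  have hMzd : ∀ j i, DifferentiableAt ℝ (fun y => M (z y) j i) q :=
    fun j i => DifferentiableAt.comp q ((hMd j i).restrictScalars ℝ) hzd
  have hMzf : ∀ j i (v : Fin m → ℂ), fderiv ℝ (fun y => M (z y) j i) q v
      = deriv (fun w => M w j i) (z q) * fderiv ℝ z q v := by
    intro j i v
    have hcomp : (fun y => M (z y) j i) = (fun w => M w j i) ∘ z := rfl
    rw [hcomp, fderiv_comp q ((hMd j i).restrictScalars ℝ) hzd]
    simp only [ContinuousLinearMap.coe_comp', Function.comp_apply]
    rw [(hMd j i).fderiv_restrictScalars ℝ]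
    simp only [ContinuousLinearMap.coe_restrictScalars']
    have hmap : fderiv ℂ (fun w => M w j i) (z q) (fderiv ℝ z q v)
        = (fderiv ℝ z q v) • fderiv ℂ (fun w => M w j i) (z q) 1 := by
      rw [← (fderiv ℂ (fun w => M w j i) (z q)).map_smul]
      simp
    rw [hmap, fderiv_apply_one_eq_deriv]
    simp [smul_eq_mul, mul_comm]
  -- skew-symmetry facts
  have hNskew : ∀ i j, M (z q) j i = -M (z q) i j := by
    intro i j
    have h := congrFun (congrFun (hskew (z q) hzVq) i) j
    simpa [Matrix.transpose_apply, Matrix.neg_apply] using h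
  have hgskew : ∀ i j, deriv (fun w => M w j i) (z q) = -deriv (fun w => M w i j) (z q) := by
    intro i j
    have hEq : (fun w => M w j i) =ᶠ[nhds (z q)] fun w => -(M w i j) := by
      filter_upwards [hV.mem_nhds hzVq] with v hv
      have h := congrFun (congrFun (hskew v hv) i) j
      simpa [Matrix.transpose_apply, Matrix.neg_apply] using h
    rw [hEq.deriv_eq, deriv.fun_neg]
  -- differentiating the holomorphy relation
  have hA0 : ∀ i (v : Fin m → ℂ),
      fderiv ℝ (fun y => wdqbar z i y + ∑ j, M (z y) j i * wdq z j y) q v = 0 := by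
    intro i v
    have hEq : (fun y => wdqbar z i y + ∑ j, M (z y) j i * wdq z j y)
        =ᶠ[nhds q] fun _ => (0 : ℂ) := by
      filter_upwards [hqU] with y hy using hhol y hy i
    rw [hEq.fderiv_eq]
    simp
  have hexp : ∀ i (v : Fin m → ℂ),
      fderiv ℝ (fun y => wdqbar z i y + ∑ j, M (z y) j i * wdq z j y) q v
        = fderiv ℝ (fun y => wdqbar z i y) q v
          + ∑ j, (fderiv ℝ (fun y => M (z y) j i) q v * wdq z j q
              + M (z q) j i * fderiv ℝ (fun y => wdq z j y) q v) := by
    intro i v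
    have hsd : ∀ j : Fin m, DifferentiableAt ℝ (fun y => M (z y) j i * wdq z j y) q :=
      fun j => (hMzd j i).mul (hw_d j)
    rw [fderiv_fun_add (hwbar_d i) (DifferentiableAt.fun_sum (fun j _ => hsd j))]
    simp only [ContinuousLinearMap.add_apply]
    congr 1
    rw [fderiv_fun_sum (fun j _ => hsd j)]
    simp only [ContinuousLinearMap.coe_sum', Finset.sum_apply]
    refine Finset.sum_congr rfl fun j _ => ?_
    rw [fderiv_fun_mul (hMzd j i) (hw_d j)]
    simp only [ContinuousLinearMap.add_apply, ContinuousLinearMap.smul_apply, smul_eq_mul]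
    ring
  -- the two scalar equations
  have heq1 : ∀ i, (z'' (Pi.single i 1) (Pi.single i 1)
        + Complex.I * z'' (Pi.single i 1) (Pi.single i Complex.I)) / 2
      + ∑ j, (deriv (fun w => M w j i) (z q) * fderiv ℝ z q (Pi.single i 1) * wdq z j q
          + M (z q) j i * ((z'' (Pi.single i 1) (Pi.single j 1)
              - Complex.I * z'' (Pi.single i 1) (Pi.single j Complex.I)) / 2)) = 0 := by
    intro i
    have h := hA0 i (Pi.single i 1)
    rw [hexp, hwbar_f] at h
    simp only [hMzf, hw_f] at h
    exact h
  have heq2 : ∀ i, (z'' (Pi.single i Complex.I) (Pi.single i 1)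
        + Complex.I * z'' (Pi.single i Complex.I) (Pi.single i Complex.I)) / 2
      + ∑ j, (deriv (fun w => M w j i) (z q) * fderiv ℝ z q (Pi.single i Complex.I) * wdq z j q
          + M (z q) j i * ((z'' (Pi.single i Complex.I) (Pi.single j 1)
              - Complex.I * z'' (Pi.single i Complex.I) (Pi.single j Complex.I)) / 2)) = 0 := by
    intro i
    have h := hA0 i (Pi.single i Complex.I)
    rw [hexp, hwbar_f] at h
    simp only [hMzf, hw_f] at h
    exact h
  constructor
  · -- Laplacian
    have hlap : lap z q = ∑ i, (z'' (Pi.single i 1) (Pi.single i 1)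
        + z'' (Pi.single i Complex.I) (Pi.single i Complex.I)) := by
      simp only [lap, pdRe, pdIm, hBf]
    rw [hlap]
    exact lap_aux
      (fun i j => z'' (Pi.single i 1) (Pi.single j 1))
      (fun i j => z'' (Pi.single i 1) (Pi.single j Complex.I))
      (fun i j => z'' (Pi.single i Complex.I) (Pi.single j 1))
      (fun i j => z'' (Pi.single i Complex.I) (Pi.single j Complex.I))
      (fun j i => deriv (fun w => M w j i) (z q))
      (fun j i => M (z q) j i)
      (fun i => fderiv ℝ z q (Pi.single i 1))
      (fun i => fderiv ℝ z q (Pi.single i Complex.I))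
      (fun j => wdq z j q)
      (fun i j => hsymm _ _) (fun i j => hsymm _ _) (fun i j => hsymm _ _)
      (fun i j => hgskew i j) (fun i j => hNskew i j)
      (fun j => rfl) heq1 heq2
  · -- horizontal weak conformality
    have hhwc : hwc z q = ∑ i, ((fderiv ℝ z q (Pi.single i 1)) ^ 2
        + (fderiv ℝ z q (Pi.single i Complex.I)) ^ 2) := by
      simp only [hwc, pdRe, pdIm]
    rw [hhwc]
    exact hwc_aux
      (fun j i => M (z q) j i)
      (fun i => fderiv ℝ z q (Pi.single i 1))
      (fun i => fderiv ℝ z q (Pi.single i Complex.I))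
      (fun j => wdq z j q)
      (fun i j => hNskew i j)
      (fun j => rfl)
      (fun i => by
        have h := hhol q hq i
        simpa only [wdqbar, pdRe, pdIm] using h)
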